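/- For every s ∈ ℂ with 0 < Re(s) < 1, the function t ↦ e^{−st}·{e^t} is Lebesgue integrable on (0,∞), the function t ↦ e^{−st}·e^{t} is Lebesgue integrable on (−∞,0), and ζ(s)/s = −∫_0^∞ e^{−st}·{e^t} dt − ∫_{−∞}^0 e^{−st}·e^{t} dt, where ζ is the Riemann zeta function and {x} = x − ⌊x⌋ denotes the fractional part. -/

import Mathlib

open MeasureTheory Set Filter Topology Asymptotics

noncomputable section ZetaStripAux

def frz (s : ℂ) (x : ℝ) : ℂ := ((Int.fract x : ℝ) : ℂ) * (x:ℂ) ^ (-s - 1)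

def findi : ℝ → ℂ := (Set.Ioi (1:ℝ)).indicator (fun x => ((Int.fract x : ℝ) : ℂ))

def Uset : Set ℂ := {z : ℂ | 0 < z.re ∧ z.re < 2 ∧ z ≠ 1}

lemma frz_aesm (s : ℂ) {t : Set ℝ} (ht : MeasurableSet t) (ht' : t ⊆ Set.Ioi 0) :
    AEStronglyMeasurable (frz s) (volume.restrict t) := by
  apply AEStronglyMeasurable.mul
  · exact (Complex.measurable_ofReal.comp measurable_fract).aestronglyMeasurable
  · refine ContinuousOn.aestronglyMeasurable ?_ ht
    refine ContinuousOn.cpow (Complex.continuous_ofReal.continuousOn) continuousOn_const ?_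
    exact fun x hx => Complex.ofReal_mem_slitPlane.2 (ht' hx)

lemma norm_frz_le {s : ℂ} {x : ℝ} (hx : 0 < x) : ‖frz s x‖ ≤ x ^ (-s.re - 1) := by
  rw [frz, norm_mul, Complex.norm_real, Real.norm_eq_abs,
    Complex.norm_cpow_eq_rpow_re_of_pos hx]
  have h1 : |Int.fract x| ≤ 1 := by
    rw [abs_of_nonneg (Int.fract_nonneg x)]
    exact (Int.fract_lt_one x).le
  calc |Int.fract x| * x ^ (-s - 1).re ≤ 1 * x ^ (-s-1).re := by
        apply mul_le_mul_of_nonneg_right h1 (Real.rpow_nonneg hx.le _)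
    _ = x ^ (-s.re - 1) := by rw [one_mul]; norm_num [Complex.sub_re, Complex.neg_re]

lemma frz_integrableOn {s : ℂ} (hs : 0 < s.re) : IntegrableOn (frz s) (Set.Ioi 1) := by
  apply Integrable.mono' (g := fun x : ℝ => x ^ (-s.re - 1))
    (integrableOn_Ioi_rpow_of_lt (by linarith) one_pos)
    (frz_aesm s measurableSet_Ioi (fun x (hx : x ∈ Set.Ioi (1:ℝ)) => (lt_trans one_pos hx : (0:ℝ) < x)))
  filter_upwards [ae_restrict_mem measurableSet_Ioi] with x hx
  exact norm_frz_le (lt_trans one_pos hx)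

lemma step_integral {s : ℂ} (hs0 : s ≠ 0) (hs1 : s ≠ 1) (n : ℕ) (hn : 1 ≤ n) :
    ∫ x in (n:ℝ)..((n:ℝ)+1), frz s x
      = (((n:ℂ)+1)^(1-s) - (n:ℂ)^(1-s))/(1-s) + (n:ℂ) * (((n:ℂ)+1)^(-s) - (n:ℂ)^(-s))/s := by
  have hn1 : (1:ℝ) ≤ (n:ℝ) := by exact_mod_cast hn
  have h0 : (0:ℝ) ∉ Set.uIcc (n:ℝ) ((n:ℝ)+1) := by
    rw [Set.uIcc_of_le (by linarith)]
    intro h; simp only [Set.mem_Icc] at h; linarith [h.1]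
  -- replace fract by x - n a.e., and split
  have hcongr : ∫ x in (n:ℝ)..((n:ℝ)+1), frz s x
      = ∫ x in (n:ℝ)..((n:ℝ)+1), ((x:ℂ) ^ (-s) - (n:ℂ) * (x:ℂ) ^ (-s-1)) := by
    apply intervalIntegral.integral_congr_ae
    have hne : ∀ᵐ x : ℝ, x ∈ ({((n:ℝ)+1)}ᶜ : Set ℝ) :=
      compl_mem_ae_iff.mpr (measure_singleton _)
    filter_upwards [hne] with x hx' hmem
    have hx : x ≠ (n:ℝ)+1 := hx'
    rw [Set.uIoc_of_le (by linarith)] at hmem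
    obtain ⟨h1, h2⟩ := hmem
    have hfl : Int.fract x = x - n := by
      rw [Int.fract]
      have : ⌊x⌋ = (n:ℤ) := by
        rw [Int.floor_eq_iff]
        constructor
        · exact_mod_cast h1.le
        · push_cast; exact lt_of_le_of_ne h2 hx
      rw [this]; push_cast; ring
    have hx0 : (x:ℂ) ≠ 0 := by
      simp only [ne_eq, Complex.ofReal_eq_zero]
      intro h; rw [h] at h1; linarith
    rw [frz, hfl]
    push_cast
    rw [sub_mul, show -s = (-s-1) + 1 by ring, Complex.cpow_add _ _ hx0, Complex.cpow_one]
    ring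
  rw [hcongr, intervalIntegral.integral_sub (intervalIntegral.intervalIntegrable_cpow (Or.inr h0))
      ((intervalIntegral.intervalIntegrable_cpow (Or.inr h0)).const_mul _),
    intervalIntegral.integral_const_mul,
    integral_cpow (Or.inr ⟨by intro h; apply hs1; linear_combination -h, h0⟩),
    integral_cpow (Or.inr ⟨by intro h; apply hs0; linear_combination -h, h0⟩)]
  push_cast
  rw [show -s + 1 = 1 - s by ring, show -s - 1 + 1 = -s by ring]
  ring

lemma frz_intervalIntegrable {s : ℂ} (hs : 0 < s.re) {a b : ℝ} (ha : 1 ≤ a) (hab : a ≤ b) :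
    IntervalIntegrable (frz s) volume a b := by
  rw [intervalIntegrable_iff_integrableOn_Ioc_of_le hab]
  exact (frz_integrableOn hs).mono_set (fun x hx => lt_of_lt_of_le (lt_of_le_of_lt ha hx.1) le_rfl)

lemma key_formula {s : ℂ} (hs : 0 < s.re) (hs0 : s ≠ 0) (hs1 : s ≠ 1) (N : ℕ) :
    ∫ x in (1:ℝ)..((N:ℝ)+1), frz s x
      = (((N:ℂ)+1) ^ (1 - s) - 1)/(1 - s)
        + ((N:ℂ) * ((N:ℂ)+1) ^ (-s) - ∑ n ∈ Finset.range (N+1), (n:ℂ) ^ (-s))/s := by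
  have h1s : (1:ℂ) - s ≠ 0 := fun h => hs1 (by linear_combination -h)
  induction N with
  | zero =>
      simp only [Nat.cast_zero, zero_add, intervalIntegral.integral_same, Finset.range_one,
        Finset.sum_singleton, Complex.one_cpow, Complex.zero_cpow (neg_ne_zero.mpr hs0)]
      simp
  | succ N ih =>
      have hadj : ∫ x in (1:ℝ)..((N:ℝ)+1+1), frz s x
          = (∫ x in (1:ℝ)..((N:ℝ)+1), frz s x) + ∫ x in ((N:ℝ)+1)..((N:ℝ)+1+1), frz s x := by
        rw [intervalIntegral.integral_add_adjacent_intervals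
          (frz_intervalIntegrable hs le_rfl (by push_cast; linarith))
          (frz_intervalIntegrable hs (by push_cast; linarith) (by linarith))]
      have hstep := step_integral hs0 hs1 (N+1) (Nat.le_add_left 1 N)
      have hsum : ∑ n ∈ Finset.range (N+1+1), (n:ℂ)^(-s)
          = (∑ n ∈ Finset.range (N+1), (n:ℂ)^(-s)) + ((N:ℂ)+1)^(-s) := by
        rw [Finset.sum_range_succ]; push_cast; ring
      push_cast at hstep hadj hsum ⊢
      rw [hadj, ih, hstep, hsum]
      field_simp
      ring

lemma tendsto_cpow_aux {s : ℂ} (hs : 1 < s.re) :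
    Tendsto (fun N : ℕ => (((N:ℂ)+1) ^ (1 - s))) atTop (nhds 0) := by
  rw [tendsto_zero_iff_norm_tendsto_zero]
  have hnorm : ∀ N : ℕ, ‖(((N:ℂ)+1) ^ (1 - s))‖ = ((N:ℝ)+1) ^ (1 - s.re) := by
    intro N
    have : ((N:ℂ)+1) = (((N+1:ℕ)):ℂ) := by push_cast; ring
    rw [this, Complex.norm_natCast_cpow_of_pos (Nat.succ_pos N)]
    push_cast
    simp [Complex.sub_re]
  simp only [hnorm]
  have h1 : Tendsto (fun N : ℕ => ((N:ℝ)+1)) atTop atTop :=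
    tendsto_atTop_add_const_right _ 1 tendsto_natCast_atTop_atTop
  have h2 : Tendsto (fun x : ℝ => x ^ (1 - s.re)) atTop (nhds 0) := by
    have := tendsto_rpow_neg_atTop (y := s.re - 1) (by linarith)
    simpa [neg_sub] using this
  exact h2.comp h1

lemma tendsto_NB_aux {s : ℂ} (hs : 1 < s.re) :
    Tendsto (fun N : ℕ => ((N:ℂ) * ((N:ℂ)+1) ^ (-s))) atTop (nhds 0) := by
  rw [tendsto_zero_iff_norm_tendsto_zero]
  apply squeeze_zero (fun N => norm_nonneg _) (g := fun N : ℕ => ((N:ℝ)+1) ^ (1 - s.re))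
  · intro N
    have hb : ((N:ℂ)+1) = (((N+1:ℕ)):ℂ) := by push_cast; ring
    rw [norm_mul, hb, Complex.norm_natCast_cpow_of_pos (Nat.succ_pos N), Complex.norm_natCast]
    push_cast
    rw [show (1:ℝ) - s.re = 1 + (-s).re by simp [Complex.neg_re]; ring,
      Real.rpow_add (by positivity), Real.rpow_one]
    have : ((N:ℝ)) ≤ (N:ℝ)+1 := by linarith
    exact mul_le_mul_of_nonneg_right this (Real.rpow_nonneg (by positivity) _)
  · have h1 : Tendsto (fun N : ℕ => ((N:ℝ)+1)) atTop atTop :=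
      tendsto_atTop_add_const_right _ 1 tendsto_natCast_atTop_atTop
    have h2 : Tendsto (fun x : ℝ => x ^ (1 - s.re)) atTop (nhds 0) := by
      have := tendsto_rpow_neg_atTop (y := s.re - 1) (by linarith)
      simpa [neg_sub] using this
    exact h2.comp h1

lemma tendsto_sum_aux {s : ℂ} (hs : 1 < s.re) :
    Tendsto (fun N : ℕ => ∑ n ∈ Finset.range (N+1), (n:ℂ) ^ (-s)) atTop
      (nhds (riemannZeta s)) := by
  have hsummable : Summable (fun n : ℕ => 1 / (n:ℂ) ^ s) :=
    Complex.summable_one_div_nat_cpow.mpr hs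
  have heq : (fun n : ℕ => (n:ℂ) ^ (-s)) = (fun n : ℕ => 1 / (n:ℂ) ^ s) := by
    funext n; rw [Complex.cpow_neg, one_div]
  have h1 := hsummable.hasSum.tendsto_sum_nat
  rw [← zeta_eq_tsum_one_div_nat_cpow hs] at h1
  rw [heq]
  exact h1.comp (tendsto_add_atTop_nat 1)

lemma integral_frz_eq {s : ℂ} (hs : 1 < s.re) :
    ∫ x in Set.Ioi (1:ℝ), frz s x = 1/(s-1) - riemannZeta s / s := by
  have hs0 : s ≠ 0 := fun h => by simp [h] at hs; linarith
  have hs1 : s ≠ 1 := fun h => by simp [h] at hs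
  have h1s : (1:ℂ) - s ≠ 0 := fun h => hs1 (by linear_combination -h)
  have hpos : (0:ℝ) < s.re := by linarith
  have T1 : Tendsto (fun N : ℕ => ∫ x in (1:ℝ)..((N:ℝ)+1), frz s x) atTop
      (nhds (∫ x in Set.Ioi (1:ℝ), frz s x)) := by
    apply intervalIntegral_tendsto_integral_Ioi _ (frz_integrableOn hpos)
    exact tendsto_atTop_add_const_right _ 1 tendsto_natCast_atTop_atTop
  have T2 : Tendsto (fun N : ℕ => ∫ x in (1:ℝ)..((N:ℝ)+1), frz s x) atTop
      (nhds ((0 - 1)/(1-s) + ((0:ℂ) - riemannZeta s)/s)) := by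
    simp only [key_formula hpos hs0 hs1]
    exact (((tendsto_cpow_aux hs).sub tendsto_const_nhds).div_const _).add
      ((((tendsto_NB_aux hs).sub (tendsto_sum_aux hs))).div_const _)
  have := tendsto_nhds_unique T1 T2
  rw [this]
  have h1 : s - 1 ≠ 0 := sub_ne_zero.mpr hs1
  field_simp
  ring

lemma mellin_findi (s : ℂ) : mellin findi (-s) = ∫ x in Set.Ioi (1:ℝ), frz s x := by
  rw [mellin]
  have : ∀ x : ℝ, ((x:ℂ) ^ (-s - 1)) • findi x
      = (Set.Ioi (1:ℝ)).indicator (frz s) x := by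
    intro x
    by_cases hx : x ∈ Set.Ioi (1:ℝ)
    · simp [findi, frz, Set.indicator_of_mem hx, smul_eq_mul]; ring
    · simp [findi, Set.indicator_of_notMem hx]
  simp only [this]
  rw [setIntegral_indicator measurableSet_Ioi]
  congr 1
  rw [Set.Ioi_inter_Ioi]
  norm_num

lemma findi_locallyIntegrableOn : LocallyIntegrableOn findi (Set.Ioi (0:ℝ)) := by
  intro x hx
  refine ⟨Set.Ioo (x/2) (x+1), ?_, ?_⟩
  · apply mem_nhdsWithin_of_mem_nhds
    exact Ioo_mem_nhds (by simp at hx ⊢; linarith) (by linarith)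
  · apply Integrable.mono' (g := fun _ : ℝ => (1:ℝ))
    · exact integrable_const 1
    · apply AEStronglyMeasurable.indicator _ measurableSet_Ioi
      exact (Complex.measurable_ofReal.comp measurable_fract).aestronglyMeasurable
    · filter_upwards with y
      rw [findi]
      by_cases hy : y ∈ Set.Ioi (1:ℝ)
      · rw [Set.indicator_of_mem hy]
        simp only [Complex.norm_real, Real.norm_eq_abs]
        rw [abs_of_nonneg (Int.fract_nonneg y)]
        exact (Int.fract_lt_one y).le
      · rw [Set.indicator_of_notMem hy]; simp

lemma findi_isBigO_top : findi =O[atTop] (fun x : ℝ => x ^ (-(0:ℝ))) := by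
  apply IsBigO.of_bound 1
  filter_upwards [eventually_ge_atTop (1:ℝ)] with x hx
  rw [Real.rpow_neg (by linarith), Real.rpow_zero]
  simp only [norm_one, mul_one, inv_one]
  rw [findi]
  by_cases hy : x ∈ Set.Ioi (1:ℝ)
  · rw [Set.indicator_of_mem hy]
    simp only [Complex.norm_real, Real.norm_eq_abs]
    rw [abs_of_nonneg (Int.fract_nonneg x)]
    exact (Int.fract_lt_one x).le
  · rw [Set.indicator_of_notMem hy]; simp

lemma findi_isBigO_zero : findi =O[nhdsWithin 0 (Set.Ioi 0)] (fun x : ℝ => x ^ (-(-2:ℝ))) := by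
  apply IsBigO.of_bound 1
  filter_upwards [Ioo_mem_nhdsGT_of_mem (Set.left_mem_Ico.mpr one_pos)] with x hx
  rw [findi, Set.indicator_of_notMem (by simp at hx ⊢; linarith [hx.2])]
  simp only [norm_zero]
  positivity

lemma differentiable_G {z : ℂ} (h0 : 0 < z.re) (h2 : z.re < 2) :
    DifferentiableAt ℂ (fun w => mellin findi (-w)) z := by
  have h : DifferentiableAt ℂ (mellin findi) (-z) :=
    mellin_differentiableAt_of_isBigO_rpow findi_locallyIntegrableOn
      findi_isBigO_top (by simp [Complex.neg_re]; linarith)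
      findi_isBigO_zero (by simp [Complex.neg_re]; linarith)
  exact h.comp z (differentiableAt_id.neg)

lemma Uset_open : IsOpen Uset := by
  have h1 : IsOpen {z : ℂ | 0 < z.re} := isOpen_lt continuous_const Complex.continuous_re
  have h2 : IsOpen {z : ℂ | z.re < 2} := isOpen_lt Complex.continuous_re continuous_const
  have h3 : IsOpen {z : ℂ | z ≠ 1} := isOpen_ne
  have he : Uset = {z : ℂ | 0 < z.re} ∩ ({z : ℂ | z.re < 2} ∩ {z : ℂ | z ≠ 1}) := rfl
  rw [he]
  exact h1.inter (h2.inter h3)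

lemma Uset_preconnected : IsPreconnected Uset := by
  set P : Set ℂ := {z | 0 < z.re ∧ z.re < 1} with hP
  set Q : Set ℂ := {z | 1 < z.re ∧ z.re < 2} with hQ
  set Rp : Set ℂ := {z | 0 < z.re ∧ z.re < 2 ∧ 0 < z.im} with hRp
  set Rm : Set ℂ := {z | 0 < z.re ∧ z.re < 2 ∧ z.im < 0} with hRm
  have cP : IsPreconnected P :=
    ((convex_halfSpace_re_gt 0).inter (convex_halfSpace_re_lt 1)).isPreconnected
  have cQ : IsPreconnected Q :=
    ((convex_halfSpace_re_gt 1).inter ((convex_halfSpace_re_lt 2))).isPreconnected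
  have cRp : IsPreconnected Rp :=
    ((convex_halfSpace_re_gt 0).inter
      ((convex_halfSpace_re_lt 2).inter (convex_halfSpace_im_gt 0))).isPreconnected
  have cRm : IsPreconnected Rm :=
    ((convex_halfSpace_re_gt 0).inter
      ((convex_halfSpace_re_lt 2).inter (convex_halfSpace_im_lt 0))).isPreconnected
  have z1 : Complex.mk (1/2) 1 ∈ P ∩ Rp := by
    constructor <;> simp [hP, hRp, Complex.ext_iff] <;> norm_num
  have c1 : IsPreconnected (P ∪ Rp) :=
    cP.union _ z1.1 z1.2 cRp
  have z2 : Complex.mk (3/2) 1 ∈ (P ∪ Rp) ∩ Q := by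
    constructor
    · right; simp [hRp]; norm_num
    · simp [hQ]; norm_num
  have c2 : IsPreconnected ((P ∪ Rp) ∪ Q) := c1.union _ z2.1 z2.2 cQ
  have z3 : Complex.mk (1/2) (-1) ∈ ((P ∪ Rp) ∪ Q) ∩ Rm := by
    constructor
    · left; left; simp [hP]; norm_num
    · simp [hRm]; norm_num
  have c3 : IsPreconnected (((P ∪ Rp) ∪ Q) ∪ Rm) := c2.union _ z3.1 z3.2 cRm
  have he : Uset = ((P ∪ Rp) ∪ Q) ∪ Rm := by
    ext z
    simp only [Uset, Set.mem_setOf_eq, Set.mem_union, hP, hQ, hRp, hRm]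
    constructor
    · rintro ⟨h0, h2, hne⟩
      rcases lt_trichotomy z.re 1 with h | h | h
      · exact Or.inl (Or.inl (Or.inl ⟨h0, h⟩))
      · rcases lt_trichotomy z.im 0 with hi | hi | hi
        · exact Or.inr ⟨h0, h2, hi⟩
        · exact absurd (Complex.ext h (by simpa using hi)) hne
        · exact Or.inl (Or.inl (Or.inr ⟨h0, h2, hi⟩))
      · exact Or.inl (Or.inr ⟨h, h2⟩)
    · rintro (((⟨a, b⟩ | ⟨a, b, c⟩) | ⟨a, b⟩) | ⟨a, b, c⟩)
      · refine ⟨a, by linarith, fun h => by rw [h] at b; simp at b⟩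
      · refine ⟨a, b, fun h => by rw [h] at c; simp at c⟩
      · refine ⟨by linarith, b, fun h => by rw [h] at a; simp at a⟩
      · refine ⟨a, b, fun h => by rw [h] at c; simp at c⟩
  rw [he]
  exact c3

lemma zeta_div_eq_strip {s : ℂ} (h0 : 0 < s.re) (h1 : s.re < 1) :
    riemannZeta s / s = 1/(s-1) - ∫ x in Set.Ioi (1:ℝ), frz s x := by
  set f : ℂ → ℂ := fun z => riemannZeta z / z with hf
  set g : ℂ → ℂ := fun z => 1/(z-1) - mellin findi (-z) with hg
  have hfa : AnalyticOnNhd ℂ f Uset := by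
    apply DifferentiableOn.analyticOnNhd _ Uset_open
    intro z hz
    obtain ⟨hz0, hz2, hz1⟩ := hz
    exact ((differentiableAt_riemannZeta hz1).div differentiableAt_id
      (fun h => by simp only [id_eq] at h; rw [h] at hz0; exact lt_irrefl 0 (by simpa using hz0))).differentiableWithinAt
  have hga : AnalyticOnNhd ℂ g Uset := by
    apply DifferentiableOn.analyticOnNhd _ Uset_open
    intro z hz
    obtain ⟨hz0, hz2, hz1⟩ := hz
    apply DifferentiableAt.differentiableWithinAt
    apply DifferentiableAt.sub
    · apply DifferentiableAt.div (differentiableAt_const _)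
        (differentiableAt_id.sub (differentiableAt_const _))
      exact sub_ne_zero.mpr hz1
    · exact differentiable_G hz0 hz2
  have hz₀ : (((3/2:ℝ)) : ℂ) ∈ Uset := by
    refine ⟨by rw [Complex.ofReal_re]; norm_num, by rw [Complex.ofReal_re]; norm_num, ?_⟩
    intro h
    rw [show (1:ℂ) = ((1:ℝ):ℂ) by norm_num] at h
    have := Complex.ofReal_inj.mp h
    norm_num at this
  have hfreq : ∃ᶠ z in nhdsWithin (((3/2:ℝ)):ℂ) {(((3/2:ℝ)):ℂ)}ᶜ, f z = g z := by
    apply Filter.Eventually.frequently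
    apply Filter.Eventually.filter_mono nhdsWithin_le_nhds
    have hopen : IsOpen {z : ℂ | 1 < z.re} := isOpen_lt continuous_const Complex.continuous_re
    filter_upwards [hopen.mem_nhds (by simp only [Set.mem_setOf_eq, Complex.ofReal_re]; norm_num)]
      with z hz
    have hz1 : (1:ℝ) < z.re := hz
    simp only [hf, hg]
    rw [mellin_findi, integral_frz_eq hz1]
    ring
  have := hfa.eqOn_of_preconnected_of_frequently_eq hga Uset_preconnected hz₀ hfreq
  have hsU : s ∈ Uset := ⟨h0, by linarith, fun h => by rw [h] at h1; simp at h1⟩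
  have hval := this hsU
  rw [hf, hg] at hval
  simp only at hval
  rw [hval, mellin_findi]

lemma exp_image_Ioi : Real.exp '' Set.Ioi (0:ℝ) = Set.Ioi (1:ℝ) := by
  ext x
  constructor
  · rintro ⟨t, ht, rfl⟩
    simpa using Real.exp_lt_exp.mpr (Set.mem_Ioi.mp ht)
  · intro hx
    have hx1 : (1:ℝ) < x := hx
    exact ⟨Real.log x, Real.log_pos hx1, Real.exp_log (by linarith)⟩

lemma cexp_cpow (t : ℝ) (c : ℂ) :
    ((Real.exp t : ℝ) : ℂ) ^ c = Complex.exp (c * t) := by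
  rw [Complex.ofReal_exp, Complex.cpow_def_of_ne_zero (Complex.exp_ne_zero _),
    Complex.log_exp (by simpa using Real.pi_pos) (by simpa using Real.pi_pos.le)]
  ring_nf

lemma smul_frz_exp (s : ℂ) (t : ℝ) :
    |Real.exp t| • frz s (Real.exp t)
      = Complex.exp (-s * t) * ((Int.fract (Real.exp t) : ℝ) : ℂ) := by
  rw [abs_of_pos (Real.exp_pos t), frz, cexp_cpow t (-s-1), Complex.real_smul]
  rw [Complex.ofReal_exp]
  rw [show -s * (t:ℂ) = t + (-s-1) * t by ring, Complex.exp_add]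
  ring

lemma change_var (s : ℂ) :
    ∫ x in Set.Ioi (1:ℝ), frz s x
      = ∫ t in Set.Ioi (0:ℝ), Complex.exp (-s * t) * ((Int.fract (Real.exp t) : ℝ) : ℂ) := by
  have h := integral_image_eq_integral_abs_deriv_smul (s := Set.Ioi (0:ℝ)) (f := Real.exp) (f' := Real.exp)
    measurableSet_Ioi (fun t _ => (Real.hasDerivAt_exp t).hasDerivWithinAt)
    (Real.exp_injective.injOn) (frz s)
  rw [exp_image_Ioi] at h
  rw [h]
  exact setIntegral_congr_fun measurableSet_Ioi (fun t _ => smul_frz_exp s t)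

lemma integrable_part1 {s : ℂ} (hs : 0 < s.re) :
    IntegrableOn
      (fun t : ℝ => Complex.exp (-s * t) * ((Int.fract (Real.exp t) : ℝ) : ℂ)) (Set.Ioi 0) := by
  have h := (integrableOn_image_iff_integrableOn_abs_deriv_smul (s := Set.Ioi (0:ℝ)) (f := Real.exp) (f' := Real.exp)
    measurableSet_Ioi (fun t _ => (Real.hasDerivAt_exp t).hasDerivWithinAt)
    (Real.exp_injective.injOn) (frz s))
  rw [exp_image_Ioi] at h
  have h2 := h.mp (frz_integrableOn hs)
  exact h2.congr_fun (fun t _ => smul_frz_exp s t) measurableSet_Ioi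

lemma integrand2_eq (s : ℂ) (t : ℝ) :
    Complex.exp (-s * t) * ((Real.exp t : ℝ) : ℂ) = Complex.exp ((1 - s) * t) := by
  rw [Complex.ofReal_exp, ← Complex.exp_add]
  ring_nf

lemma cexp_integrableOn_Ioi {c : ℂ} (hc : 0 < c.re) :
    IntegrableOn (fun u : ℝ => Complex.exp (-c * u)) (Set.Ioi 0) := by
  apply Integrable.mono' (g := fun u : ℝ => Real.exp (-c.re * u))
  · exact exp_neg_integrableOn_Ioi 0 hc
  · exact (Complex.continuous_exp.comp (continuous_const.mul Complex.continuous_ofReal)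
      ).aestronglyMeasurable
  · filter_upwards with u
    rw [Complex.norm_exp]
    simp [Complex.mul_re]

lemma integral_cexp_Ioi {c : ℂ} (hc : 0 < c.re) :
    ∫ u in Set.Ioi (0:ℝ), Complex.exp (-c * u) = 1 / c := by
  have hc0 : c ≠ 0 := fun h => by rw [h] at hc; simp at hc
  have T1 := intervalIntegral_tendsto_integral_Ioi 0 (cexp_integrableOn_Ioi hc) tendsto_id
  have T2 : Tendsto (fun T : ℝ => ∫ u in (0:ℝ)..T, Complex.exp (-c * u)) atTop
      (nhds (1/c)) := by
    have hval : ∀ T : ℝ, ∫ u in (0:ℝ)..T, Complex.exp (-c * u)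
        = (Complex.exp (-c * T) - 1) / (-c) := by
      intro T
      rw [integral_exp_mul_complex (neg_ne_zero.mpr hc0)]
      simp
    simp only [hval]
    have h0 : Tendsto (fun T : ℝ => Complex.exp (-c * T)) atTop (nhds 0) := by
      rw [tendsto_zero_iff_norm_tendsto_zero]
      have : ∀ T : ℝ, ‖Complex.exp (-c * T)‖ = Real.exp (-c.re * T) := by
        intro T
        rw [Complex.norm_exp]
        simp [Complex.mul_re]
      simp only [this]
      exact Real.tendsto_exp_atBot.comp
        (Tendsto.const_mul_atTop_of_neg (neg_neg_iff_pos.mpr hc) tendsto_id)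
    have h3 : Tendsto (fun T : ℝ => (Complex.exp (-c * T) - 1) / (-c)) atTop
        (nhds ((0 - 1) / (-c))) := (h0.sub (tendsto_const_nhds (x := (1:ℂ)))).div_const (-c)
    convert h3 using 2
    rw [zero_sub, div_neg, neg_div, neg_neg, one_div]
  exact tendsto_nhds_unique T1 T2

lemma integrable_part2 {s : ℂ} (h1 : s.re < 1) :
    IntegrableOn (fun t : ℝ => Complex.exp (-s * t) * ((Real.exp t : ℝ) : ℂ)) (Set.Iio 0) := by
  simp only [integrand2_eq s]
  have h : IntegrableOn (fun u : ℝ => Complex.exp (-(1-s) * u)) (Set.Ioi 0) :=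
    cexp_integrableOn_Ioi (by simp [Complex.sub_re]; linarith)
  have m : MeasurableEmbedding fun x : ℝ => -x :=
    (Homeomorph.neg ℝ).isClosedEmbedding.measurableEmbedding
  have hmap : IntegrableOn (fun u : ℝ => Complex.exp (-(1-s) * u)) (Set.Ioi 0)
      (Measure.map (fun x : ℝ => -x) volume) := by
    rwa [Measure.map_neg_eq_self (volume : Measure ℝ)]
  have h2 := (m.integrableOn_map_iff).mp hmap
  have : ((fun x : ℝ => -x) ⁻¹' Set.Ioi 0) = Set.Iio 0 := by
    ext x; simp
  rw [this] at h2
  apply h2.congr_fun _ measurableSet_Iio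
  intro t _
  simp only [Function.comp]
  rw [show -(1-s) * ((-t : ℝ) : ℂ) = (1-s) * t by push_cast; ring]

lemma integral_part2 {s : ℂ} (h1 : s.re < 1) :
    ∫ t in Set.Iio (0:ℝ), Complex.exp (-s * t) * ((Real.exp t : ℝ) : ℂ) = 1 / (1 - s) := by
  simp only [integrand2_eq s]
  rw [setIntegral_congr_set Iio_ae_eq_Iic]
  have h2 := integral_comp_neg_Iic (0:ℝ) (fun u : ℝ => Complex.exp (-(1-s)*u))
  simp only [neg_zero] at h2
  have h3 : ∀ t : ℝ, Complex.exp ((1-s) * (t : ℂ))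
      = Complex.exp (-(1-s) * ((-t : ℝ) : ℂ)) := by
    intro t; push_cast; ring_nf
  calc ∫ t in Set.Iic (0:ℝ), Complex.exp ((1-s) * (t:ℂ))
      = ∫ t in Set.Iic (0:ℝ), Complex.exp (-(1-s) * ((-t : ℝ) : ℂ)) := by
        simp only [h3]
    _ = ∫ u in Set.Ioi (0:ℝ), Complex.exp (-(1-s) * (u:ℂ)) := h2
    _ = 1 / (1-s) := integral_cexp_Ioi (by simp [Complex.sub_re]; linarith)

end ZetaStripAux

theorem statement8 (s : ℂ) (h0 : 0 < s.re) (h1 : s.re < 1) :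
    MeasureTheory.IntegrableOn
      (fun t : ℝ => Complex.exp (-s * t) * ((Int.fract (Real.exp t) : ℝ) : ℂ)) (Set.Ioi 0) ∧
    MeasureTheory.IntegrableOn
      (fun t : ℝ => Complex.exp (-s * t) * (Real.exp t : ℂ)) (Set.Iio 0) ∧
    riemannZeta s / s =
      -(∫ t in Set.Ioi (0:ℝ), Complex.exp (-s * t) * ((Int.fract (Real.exp t) : ℝ) : ℂ))
      - ∫ t in Set.Iio (0:ℝ), Complex.exp (-s * t) * (Real.exp t : ℂ) := by
  refine ⟨integrable_part1 h0, integrable_part2 h1, ?_⟩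
  rw [zeta_div_eq_strip h0 h1, change_var, integral_part2 h1]
  rw [show s - 1 = -(1 - s) by ring, one_div, inv_neg, ← one_div]
  ring
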